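/- Let A = ⊕_{i∈I} H_i be a BL-chain represented as an ordinal sum of totally ordered Wajsberg hoops, and let (a_x)_{x∈X} be a family of elements of A. (1) If the infimum inf_x a_x exists and (inf_x a_x)² = inf_x (a_x²), then the family is ∧-connected (there exist i ∈ I and x ∈ X with inf_x a_x ∈ H_i and a_x ∈ H_i) or inf_x a_x is idempotent. (2) If the supremum sup_x a_x exists, then the family is ∨-connected (there exist i ∈ I and x ∈ X with sup_x a_x ∈ H_i and a_x ∈ H_i) or sup_x a_x is idempotent. -/
import Mathlib


/-! ## BL-chains and ordinal sum decompositions -/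

/-- A BL-chain: a bounded linearly ordered set with a commutative monoid operation `·`
(unit `1`, the top element) monotone in each argument, and a residuum `→` satisfying
`x·y ≤ z ↔ x ≤ (y→z)` and the divisibility law `x·(x→y) = min x y`. -/
class BLChain (A : Type*) extends LinearOrder A, CommMonoid A where
  bot : A
  bot_le : ∀ x : A, bot ≤ x
  le_one : ∀ x : A, x ≤ 1
  mul_le_mul_of_le : ∀ x y : A, x ≤ y → ∀ z : A, z * x ≤ z * y
  himp : A → A → A
  mul_le_iff_le_himp : ∀ x y z : A, x * y ≤ z ↔ x ≤ himp y z
  div : ∀ x y : A, x * himp x y = min x y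



namespace BLChain

variable {A : Type*} [BLChain A]

/-- An element is idempotent if `a · a = a`. -/
def Idem (a : A) : Prop := a * a = a

/-- `IsOrdinalSumOfWajsbergHoops H` : the BL-chain `A` is the ordinal sum of the family
of subsets `H i` (indexed by the totally ordered set `I`), where each `H i`, equipped
with the restrictions of `·` and `→` of `A`, is a (totally ordered) Wajsberg hoop, and
the operations of `A` are given from the components by the ordinal-sum rules. -/
def IsOrdinalSumOfWajsbergHoops {I : Type*} [LinearOrder I] (H : I → Set A) : Prop :=
  -- the union of the components is all of `A`
  (∀ a : A, ∃ i, a ∈ H i) ∧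
  -- distinct components intersect in `{1}` at most
  (∀ i j, i ≠ j → H i ∩ H j ⊆ {1}) ∧
  -- each component contains the unit `1` and is closed under `·` and `→`,
  -- so that it is a subhoop of `A`
  (∀ i, (1 : A) ∈ H i) ∧
  (∀ i, ∀ x ∈ H i, ∀ y ∈ H i, x * y ∈ H i ∧ himp x y ∈ H i) ∧
  -- each component is a Wajsberg hoop
  (∀ i, ∀ x ∈ H i, ∀ y ∈ H i, himp (himp x y) y = himp (himp y x) x) ∧
  -- ordinal-sum rules for elements in different components:
  -- if `x ∈ H i ∖ {1}` and `y ∈ H j` with `i < j`, then `x → y = 1` and `x · y = x`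
  (∀ i j, i < j → ∀ x ∈ H i, x ≠ 1 → ∀ y ∈ H j, himp x y = 1 ∧ x * y = x) ∧
  -- if `x ∈ H i` and `y ∈ H j` with `i > j`, then `x → y = y`
  (∀ i j, j < i → ∀ x ∈ H i, ∀ y ∈ H j, himp x y = y)

/-- A filter of the component subhoop `Hi` of `A`: a nonempty subset of `Hi` closed
under `·` and upward closed in `Hi` (w.r.t. the hoop order of `Hi`, which is the
restriction of the order of `A`). -/
def IsComponentFilter (Hi : Set A) (F : Set A) : Prop :=
  F ⊆ Hi ∧ F.Nonempty ∧ (∀ x ∈ F, ∀ y ∈ F, x * y ∈ F) ∧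
    ∀ x ∈ F, ∀ y ∈ Hi, x ≤ y → y ∈ F

/-- The component subhoop `Hi` is simple: its only filters are `{1}` and `Hi`. -/
def IsSimpleComponent (Hi : Set A) : Prop :=
  ∀ F : Set A, IsComponentFilter Hi F → F = {1} ∨ F = Hi

end BLChain



namespace BLChain

variable {A : Type*} [BLChain A]

lemma le_of_himp_eq_one' {x y : A} (h : himp x y = 1) : x ≤ y := by
  have hd := div x y
  rw [h, mul_one] at hd
  calc x = min x y := hd
    _ ≤ y := min_le_right x y

lemma mul_self_le' (x : A) : x * x ≤ x := by
  have := mul_le_mul_of_le x 1 (le_one x) x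
  simpa using this

end BLChain

/-- let `A = ⊕_{i∈I} H i` be a BL-chain represented as an ordinal sum of
totally ordered Wajsberg hoops and `(a x)_{x ∈ X}` a family in `A`.
(1) If `inf_x (a x)` exists and `(inf_x a x)² = inf_x (a x)²`, then the family is
∧-connected (some `H i` contains the infimum as well as some `a x`) or the infimum is
idempotent. (2) If `sup_x (a x)` exists, then the family is ∨-connected or the
supremum is idempotent. -/
theorem connected_or_idem_of_inf_sup (A : Type) [BLChain A]
    (I : Type) [LinearOrder I] (H : I → Set A)
    (hsum : BLChain.IsOrdinalSumOfWajsbergHoops H)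
    (X : Type) (a : X → A) :
    (∀ m : A, IsGLB (Set.range a) m → IsGLB (Set.range fun x => a x * a x) (m * m) →
      (∃ i, m ∈ H i ∧ ∃ x, a x ∈ H i) ∨ BLChain.Idem m) ∧
    (∀ s : A, IsLUB (Set.range a) s →
      (∃ i, s ∈ H i ∧ ∃ x, a x ∈ H i) ∨ BLChain.Idem s) := by
  obtain ⟨hcover, hdisj, hone, hclosed, hwa, hlt, hgt⟩ := hsum
  constructor
  · intro m hglb hglb2
    by_cases hm1 : m = 1
    · right; simp [BLChain.Idem, hm1]
    by_cases hc : ∃ i, m ∈ H i ∧ ∃ x, a x ∈ H i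
    · left; exact hc
    right
    push_neg at hc
    obtain ⟨i, hmi⟩ := hcover m
    have hlb : ∀ x, m ≤ a x * a x := by
      intro x
      obtain ⟨j, haj⟩ := hcover (a x)
      have hax1 : a x ≠ 1 := fun h => hc i hmi x (h ▸ hone i)
      have hij : i ≠ j := fun h => hc i hmi x (h ▸ haj)
      rcases lt_or_gt_of_ne hij with h | h
      · have hsq : a x * a x ∈ H j := (hclosed j _ haj _ haj).1
        exact BLChain.le_of_himp_eq_one' (hlt i j h m hmi hm1 _ hsq).1
      · have h1 : a x ≤ m := BLChain.le_of_himp_eq_one' (hlt j i h _ haj hax1 m hmi).1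
        have h2 : m ≤ a x := hglb.1 ⟨x, rfl⟩
        have hmem : m ∈ H j := (le_antisymm h2 h1) ▸ haj
        exact absurd haj (hc j hmem x)
    have h1 : m ≤ m * m := hglb2.2 (by rintro _ ⟨x, rfl⟩; exact hlb x)
    exact le_antisymm (BLChain.mul_self_le' m) h1
  · intro s hlub
    by_cases hs1 : s = 1
    · right; simp [BLChain.Idem, hs1]
    by_cases hc : ∃ i, s ∈ H i ∧ ∃ x, a x ∈ H i
    · left; exact hc
    right
    push_neg at hc
    obtain ⟨i, hsi⟩ := hcover s
    have hub : ∀ x, a x ≤ s * s := by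
      intro x
      obtain ⟨j, haj⟩ := hcover (a x)
      have hax1 : a x ≠ 1 := fun h => hc i hsi x (h ▸ hone i)
      have hij : i ≠ j := fun h => hc i hsi x (h ▸ haj)
      rcases lt_or_gt_of_ne hij with h | h
      · have h1 : s ≤ a x := BLChain.le_of_himp_eq_one' (hlt i j h s hsi hs1 _ haj).1
        have h2 : a x ≤ s := hlub.1 ⟨x, rfl⟩
        have hmem : s ∈ H j := (le_antisymm h1 h2).symm ▸ haj
        exact absurd haj (hc j hmem x)
      · have heq : a x * s = a x := (hlt j i h _ haj hax1 s hsi).2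
        have hle : a x * s ≤ s * s := by
          rw [mul_comm (a x) s]
          exact BLChain.mul_le_mul_of_le (a x) s (hlub.1 ⟨x, rfl⟩) s
        rwa [heq] at hle
    have h1 : s ≤ s * s := hlub.2 (by rintro _ ⟨x, rfl⟩; exact hub x)
    exact le_antisymm (BLChain.mul_self_le' s) h1
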